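/- The functor ∂_R: R → R fulfills (FP) at every pair of objects, i.e., for every r∈ℕ, every pair k,l of objects of R, and every finite non-empty s⊆∂_R(hom(k,l)), there exist m∈ob(R), x'∈s, y'∈∂_R(hom(l,m)) such that for each r-coloring χ of hom(k,m) there exists (y,m)∈hom(l,m) with: χ constant on {(y,m)·(x,l) : (x,l)∈hom(k,l), ∂_R(x,l)=x'} and (∂_R(y,m))·e = y'·e for each e∈s. -/

import Mathlib

/-- Morphisms of the category `R` from `m` to `n`: subsets `x ⊆ [n] = {1,…,n}` with `|x| = m`
(the pair `(x,n)` is recorded by the type depending on `n`). -/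
def RHom (m n : ℕ) : Type := {x : Finset ℕ // x ⊆ Finset.Icc 1 n ∧ x.card = m}

/-- The increasing enumeration of a finset `y` of size `l`, as a function `[l] → y`,
extended by `0` off `[l] = {1,…,l}`. -/
noncomputable def Renum (y : Finset ℕ) {l : ℕ} (h : y.card = l) (j : ℕ) : ℕ :=
  if hj : j - 1 < l then (y.orderIsoOfFin h ⟨j - 1, hj⟩ : ℕ) else 0

/-- Composition in `R`: `(y,n) · (x,m) = (f_y(x), n)` where `f_y : [m] → y` is the unique
increasing bijection. -/
noncomputable def Rcomp {k l m : ℕ} (x : RHom k l) (y : RHom l m) : RHom k m :=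
  ⟨x.1.image (Renum y.1 y.2.2), by
    constructor
    · intro z hz
      simp only [Finset.mem_image] at hz
      obtain ⟨j, hj, rfl⟩ := hz
      have hjl : j ∈ Finset.Icc 1 l := x.2.1 hj
      rw [Finset.mem_Icc] at hjl
      have hlt : j - 1 < l := by omega
      unfold Renum
      rw [dif_pos hlt]
      exact y.2.1 (y.1.orderIsoOfFin y.2.2 ⟨j - 1, hlt⟩).2
    · rw [Finset.card_image_of_injOn, x.2.2]
      intro j₁ h₁ j₂ h₂ he
      have hj₁ := x.2.1 h₁
      have hj₂ := x.2.1 h₂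
      rw [Finset.mem_Icc] at hj₁ hj₂
      have l₁ : j₁ - 1 < l := by omega
      have l₂ : j₂ - 1 < l := by omega
      unfold Renum at he
      rw [dif_pos l₁, dif_pos l₂] at he
      have hfin : (⟨j₁ - 1, l₁⟩ : Fin l) = ⟨j₂ - 1, l₂⟩ :=
        (y.1.orderIsoOfFin y.2.2).injective (Subtype.ext he)
      have hv : j₁ - 1 = j₂ - 1 := congrArg Fin.val hfin
      omega⟩

/-- The functor `∂_R` on objects: `n ↦ max(n−1, 0)` (truncated subtraction). -/
def RdelObj (n : ℕ) : ℕ := n - 1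

/-- The functor `∂_R` on morphisms: `(x,n) ↦ (x ∖ {max x}, max(n−1,0))`
(and `(∅,n) ↦ (∅, max(n−1,0))`). -/
def Rdel {m n : ℕ} (x : RHom m n) : RHom (RdelObj m) (RdelObj n) :=
  ⟨x.1.erase (x.1.max.unbotD 0), by
    constructor
    · intro z hz
      have hz' := Finset.mem_of_mem_erase hz
      have hne := Finset.ne_of_mem_erase hz
      have hnonempty : x.1.Nonempty := ⟨z, hz'⟩
      have hmax : x.1.max.unbotD 0 = x.1.max' hnonempty := by
        rw [← Finset.coe_max' hnonempty]; rfl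
      have hle : z ≤ x.1.max' hnonempty := Finset.le_max' _ z hz'
      have hlt : z < x.1.max' hnonempty := lt_of_le_of_ne hle (by rw [← hmax]; exact hne)
      have hmem := x.2.1 (x.1.max'_mem hnonempty)
      rw [Finset.mem_Icc] at hmem
      have hzmem := x.2.1 hz'
      rw [Finset.mem_Icc] at hzmem
      rw [Finset.mem_Icc]
      unfold RdelObj
      omega
    · rcases x.1.eq_empty_or_nonempty with he | hne
      · have hm : m = 0 := by rw [← x.2.2, he]; rfl
        rw [he]
        simp [hm, RdelObj]
      · have hmax : x.1.max.unbotD 0 = x.1.max' hne := by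
          rw [← Finset.coe_max' hne]; rfl
        rw [hmax, Finset.card_erase_of_mem (x.1.max'_mem hne), x.2.2]
        rfl⟩

/-- The functor `∂_R : R → R` fulfills (FP) at every pair of objects `k, l`: for every
`r ∈ ℕ` and every finite non-empty `s ⊆ ∂_R(hom(k,l))` there exist an object `m`, `x' ∈ s`,
and `y' ∈ ∂_R(hom(l,m))` such that for each `r`-coloring `χ` of `hom(k,m)` there exists
`y ∈ hom(l,m)` with `χ` constant on `{y · x : x ∈ hom(k,l), ∂_R x = x'}` and
`(∂_R y) · e = y' · e` for each `e ∈ s`. -/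
lemma Renum_eq {y : Finset ℕ} {l : ℕ} (h : y.card = l) {j : ℕ} (hj : j - 1 < l) :
    Renum y h j = y.orderEmbOfFin h ⟨j - 1, hj⟩ := by
  unfold Renum; rw [dif_pos hj]; rfl

lemma max_unbot'_eq {x : Finset ℕ} (hne : x.Nonempty) : x.max.unbotD 0 = x.max' hne := by
  rw [← Finset.coe_max' hne]; rfl

lemma RHom_zero_eq {n : ℕ} (a b : RHom 0 n) : a = b :=
  Subtype.ext (by rw [Finset.card_eq_zero.mp a.2.2, Finset.card_eq_zero.mp b.2.2])

lemma enum_Icc {n : ℕ} (h : (Finset.Icc 1 n).card = n) (i : Fin n) :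
    (Finset.Icc 1 n).orderEmbOfFin h i = (i : ℕ) + 1 := by
  have hu := Finset.orderEmbOfFin_unique h (f := fun i : Fin n => (i : ℕ) + 1)
    (fun x => by show (x : ℕ) + 1 ∈ _; rw [Finset.mem_Icc]; have := x.2; omega)
    (fun a b hab => by show (a : ℕ) + 1 < (b : ℕ) + 1; have : (a : ℕ) < b := hab; omega)
  exact (congrFun hu i).symm

noncomputable def myf (M : ℕ) {l : ℕ} (V : Finset ℕ) (hV : V.card = l - M) (i : Fin l) : ℕ :=
  if hi : (i : ℕ) < M then (i : ℕ) + 1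
  else V.orderEmbOfFin hV ⟨(i : ℕ) - M, by have := i.2; omega⟩

lemma myf_lt {M l : ℕ} {V : Finset ℕ} (hV : V.card = l - M) (i : Fin l)
    (hi : (i : ℕ) < M) : myf M V hV i = (i : ℕ) + 1 := by
  unfold myf; rw [dif_pos hi]

lemma myf_mem {M l : ℕ} {V : Finset ℕ} (hV : V.card = l - M) (i : Fin l)
    (hi : ¬ (i : ℕ) < M) : myf M V hV i ∈ V := by
  unfold myf; rw [dif_neg hi]; exact Finset.orderEmbOfFin_mem _ _ _

lemma enum_union {M l : ℕ} {V : Finset ℕ} (hV : V.card = l - M)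
    (hVgt : ∀ v ∈ V, M < v) (h : (Finset.Icc 1 M ∪ V).card = l) (i : Fin l) :
    (Finset.Icc 1 M ∪ V).orderEmbOfFin h i = myf M V hV i := by
  have hmem : ∀ x : Fin l, myf M V hV x ∈ Finset.Icc 1 M ∪ V := by
    intro x; unfold myf; split
    · next hx => exact Finset.mem_union_left _ (by rw [Finset.mem_Icc]; omega)
    · exact Finset.mem_union_right _ (Finset.orderEmbOfFin_mem _ _ _)
  have hmono : StrictMono (myf M V hV) := by
    intro a b hab
    have hab' : (a : ℕ) < b := hab
    unfold myf; split <;> split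
    · next ha hb => omega
    · next ha hb =>
        have := hVgt _ (Finset.orderEmbOfFin_mem V hV ⟨(b : ℕ) - M, by have := b.2; omega⟩)
        omega
    · next ha hb => omega
    · next ha hb =>
        exact (V.orderEmbOfFin hV).strictMono (by simp only [Fin.mk_lt_mk]; omega)
  exact (congrFun (Finset.orderEmbOfFin_unique h hmem hmono) i).symm

lemma enum_erase {z : Finset ℕ} {n : ℕ} (h : z.card = n)
    (h' : (z.erase (z.max.unbotD 0)).card = n - 1) (i : Fin (n - 1)) :
    (z.erase (z.max.unbotD 0)).orderEmbOfFin h' i =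
      z.orderEmbOfFin h ⟨(i : ℕ), by have := i.2; omega⟩ := by
  have hn2 : 2 ≤ n := by have := i.2; omega
  have hzne : z.Nonempty := Finset.card_pos.mp (by omega)
  have hmax : z.max.unbotD 0 = z.max' hzne := max_unbot'_eq hzne
  have hu := Finset.orderEmbOfFin_unique h'
    (f := fun i : Fin (n-1) => z.orderEmbOfFin h ⟨(i : ℕ), by have := i.2; omega⟩) ?_ ?_
  · exact (congrFun hu i).symm
  · intro x
    show z.orderEmbOfFin h ⟨(x : ℕ), _⟩ ∈ _
    rw [Finset.mem_erase]
    refine ⟨?_, Finset.orderEmbOfFin_mem _ _ _⟩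
    rw [hmax, ← Finset.orderEmbOfFin_last h (by omega : 0 < n)]
    intro hcon
    have h2 := (z.orderEmbOfFin h).injective hcon
    have h3 : (x : ℕ) = n - 1 := congrArg Fin.val h2
    have := x.2; omega
  · intro a b hab
    exact (z.orderEmbOfFin h).strictMono (by simp only [Fin.mk_lt_mk]; exact hab)

lemma fiber_struct {k l : ℕ} (hk : 0 < k) {x : RHom k l}
    {x' : Finset ℕ} (hx : x.val.erase (x.val.max.unbotD 0) = x') :
    ∃ t, x.val = insert t x' ∧ t ∉ x' ∧ (∀ a ∈ x', a < t) ∧ 1 ≤ t ∧ t ≤ l := by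
  have hne : x.val.Nonempty := Finset.card_pos.mp (by rw [x.2.2]; omega)
  rw [max_unbot'_eq hne] at hx
  refine ⟨x.val.max' hne, ?_, ?_, ?_, ?_, ?_⟩
  · rw [← hx, Finset.insert_erase (x.val.max'_mem hne)]
  · rw [← hx]; exact Finset.notMem_erase _ _
  · intro a ha; rw [← hx] at ha
    exact lt_of_le_of_ne (Finset.le_max' _ _ (Finset.mem_of_mem_erase ha))
      (Finset.ne_of_mem_erase ha)
  · have h1 := x.2.1 (x.val.max'_mem hne); rw [Finset.mem_Icc] at h1; omega
  · have h1 := x.2.1 (x.val.max'_mem hne); rw [Finset.mem_Icc] at h1; omega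

lemma renum_erase_eq {z : Finset ℕ} {n : ℕ} (h : z.card = n) {n' : ℕ} (hn : n' = n - 1)
    (h' : (z.erase (z.max.unbotD 0)).card = n') (j : ℕ) (hj1 : 1 ≤ j) (hj2 : j < n) :
    Renum (z.erase (z.max.unbotD 0)) h' j = Renum z h j := by
  subst hn
  rw [Renum_eq h' (by omega : j - 1 < n - 1), Renum_eq h (by omega : j - 1 < n)]
  exact enum_erase h h' ⟨j - 1, by omega⟩

lemma renum_Icc_eq {n n' : ℕ} (hn : n' = n) (h : (Finset.Icc 1 n).card = n') (j : ℕ)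
    (hj1 : 1 ≤ j) (hj2 : j ≤ n) :
    Renum (Finset.Icc 1 n) h j = j := by
  subst hn
  rw [Renum_eq h (by omega : j - 1 < n')]
  exact (enum_Icc h ⟨j - 1, by omega⟩).trans (by show j - 1 + 1 = j; omega)

theorem Rdel_fulfillsFP (r k l : ℕ) (s : Set (RHom (RdelObj k) (RdelObj l)))
    (hfin : s.Finite) (hne : s.Nonempty)
    (hsub : s ⊆ Set.range (fun x : RHom k l => Rdel x)) :
    ∃ (m : ℕ) (x' : RHom (RdelObj k) (RdelObj l)) (y' : RHom (RdelObj l) (RdelObj m)),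
      x' ∈ s ∧ (∃ y₀ : RHom l m, Rdel y₀ = y') ∧
      ∀ χ : RHom k m → Fin r, ∃ y : RHom l m,
        (∀ x₁ x₂ : RHom k l, Rdel x₁ = x' → Rdel x₂ = x' →
          χ (Rcomp x₁ y) = χ (Rcomp x₂ y)) ∧
        (∀ e ∈ s, Rcomp e (Rdel y) = Rcomp e y') := by
  obtain ⟨xs, hxs⟩ := hne
  obtain ⟨x₀, -⟩ := hsub hxs
  have hkl : k ≤ l := by
    have h1 := Finset.card_le_card x₀.2.1
    rw [x₀.2.2, Nat.card_Icc] at h1; omega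
  have hRk : RdelObj k = k - 1 := rfl
  have hRl : RdelObj l = l - 1 := rfl
  rcases Nat.eq_zero_or_pos l with hl | hl
  · subst hl
    have hk : k = 0 := by omega
    subst hk
    exact ⟨0, xs, ⟨∅, by simp, rfl⟩, hxs, ⟨⟨∅, by simp, rfl⟩, Subtype.ext (Finset.erase_empty _)⟩,
      fun χ => ⟨⟨∅, by simp, rfl⟩, fun x₁ x₂ _ _ => congrArg χ (by rw [RHom_zero_eq x₁ x₂]),
        fun e he => RHom_zero_eq _ _⟩⟩
  obtain ⟨x', hx'sF, hx'max⟩ := hfin.toFinset.exists_max_image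
    (fun e => e.val.max.unbotD 0) ((Set.Finite.toFinset_nonempty hfin).mpr ⟨xs, hxs⟩)
  have hx's : x' ∈ s := (Set.Finite.mem_toFinset hfin).mp hx'sF
  set M := x'.val.max.unbotD 0 with hM
  have hMub : ∀ e ∈ s, ∀ a ∈ e.val, a ≤ M := by
    intro e hes a ha
    have hne' : e.val.Nonempty := ⟨a, ha⟩
    have h1 : a ≤ e.val.max.unbotD 0 := by
      rw [max_unbot'_eq hne']; exact Finset.le_max' _ _ ha
    exact le_trans h1 (hx'max e ((Set.Finite.mem_toFinset hfin).mpr hes))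
  have hMx' : ∀ a ∈ x'.val, a ≤ M := hMub x' hx's
  have hMl : M ≤ l - 1 := by
    rcases x'.val.eq_empty_or_nonempty with hE | hNE
    · have : M = 0 := by rw [hM, hE]; rfl
      omega
    · have h1 := x'.2.1 (x'.val.max'_mem hNE)
      rw [Finset.mem_Icc] at h1
      rw [hM, max_unbot'_eq hNE]
      omega
  set m := l + r * l + 1 with hm
  have hRm : RdelObj m = m - 1 := rfl
  have hIcccard : ∀ n : ℕ, (Finset.Icc 1 n).card = n := fun n => by rw [Nat.card_Icc]; omega
  have hy'sub : Finset.Icc 1 (l - 1) ⊆ Finset.Icc 1 (RdelObj m) :=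
    Finset.Icc_subset_Icc le_rfl (by rw [hRm]; omega)
  have hy'card : (Finset.Icc 1 (l - 1)).card = RdelObj l := by rw [hIcccard, hRl]
  have hmnotin : m ∉ Finset.Icc 1 (l - 1) := by rw [Finset.mem_Icc]; omega
  have hy0sub : insert m (Finset.Icc 1 (l - 1)) ⊆ Finset.Icc 1 m := by
    intro a ha
    rcases Finset.mem_insert.mp ha with rfl | ha'
    · rw [Finset.mem_Icc]; omega
    · rw [Finset.mem_Icc] at ha' ⊢; omega
  have hy0card : (insert m (Finset.Icc 1 (l - 1))).card = l := by
    rw [Finset.card_insert_of_notMem hmnotin, hIcccard]; omega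
  have hy0max : (insert m (Finset.Icc 1 (l - 1))).max.unbotD 0 = m := by
    have hne0 : (insert m (Finset.Icc 1 (l - 1))).Nonempty := ⟨m, Finset.mem_insert_self _ _⟩
    rw [max_unbot'_eq hne0]
    apply le_antisymm
    · apply Finset.max'_le
      intro a ha
      rcases Finset.mem_insert.mp ha with rfl | ha'
      · exact le_rfl
      · rw [Finset.mem_Icc] at ha'; omega
    · exact Finset.le_max' _ _ (Finset.mem_insert_self _ _)
  refine ⟨m, x', ⟨Finset.Icc 1 (l - 1), hy'sub, hy'card⟩, hx's,
    ⟨⟨insert m (Finset.Icc 1 (l - 1)), hy0sub, hy0card⟩, Subtype.ext ?_⟩, ?_⟩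
  · show (insert m (Finset.Icc 1 (l - 1))).erase
      ((insert m (Finset.Icc 1 (l - 1))).max.unbotD 0) = Finset.Icc 1 (l - 1)
    rw [hy0max, Finset.erase_insert hmnotin]
  intro χ
  rcases Nat.eq_zero_or_pos r with hr | hr
  · subst hr
    exact (χ ⟨Finset.Icc 1 k, Finset.Icc_subset_Icc le_rfl (by omega), hIcccard k⟩).elim0
  have hsub' : x'.val ⊆ Finset.Icc 1 m := by
    intro a ha
    have h1 := x'.2.1 ha
    rw [Finset.mem_Icc] at h1 ⊢
    omega
  have cpf : ∀ v, 0 < k → M < v → v ≤ m →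
      insert v x'.val ⊆ Finset.Icc 1 m ∧ (insert v x'.val).card = k := by
    intro v hk hMv hvm
    refine ⟨?_, ?_⟩
    · intro a ha
      rcases Finset.mem_insert.mp ha with rfl | ha'
      · rw [Finset.mem_Icc]; omega
      · exact hsub' ha'
    · rw [Finset.card_insert_of_notMem (fun hc => by have := hMx' _ hc; omega), x'.2.2, hRk]
      omega
  let c : ℕ → Fin r := fun v =>
    if hv : 0 < k ∧ M < v ∧ v ≤ m then χ ⟨insert v x'.val, cpf v hv.1 hv.2.1 hv.2.2⟩
    else ⟨0, hr⟩
  have hcspec : ∀ v (h1 : 0 < k) (h2 : M < v) (h3 : v ≤ m),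
      c v = χ ⟨insert v x'.val, cpf v h1 h2 h3⟩ := by
    intro v h1 h2 h3
    show dite _ _ _ = _
    rw [dif_pos (⟨h1, h2, h3⟩ : 0 < k ∧ M < v ∧ v ≤ m)]
  have hcardIoc : (Finset.univ : Finset (Fin r)).card * (l - M) ≤ (Finset.Ioc M m).card := by
    rw [Finset.card_univ, Fintype.card_fin, Nat.card_Ioc]
    have h1 : r * (l - M) ≤ r * l := Nat.mul_le_mul_left _ (Nat.sub_le _ _)
    omega
  obtain ⟨b, -, hb⟩ := Finset.exists_le_card_fiber_of_mul_le_card_of_maps_to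
    (f := c) (fun a _ => Finset.mem_univ (c a)) ⟨⟨0, hr⟩, Finset.mem_univ _⟩ hcardIoc
  obtain ⟨V, hVsubf, hVcard⟩ := Finset.exists_subset_card_eq hb
  have hVIoc : ∀ v ∈ V, M < v ∧ v ≤ m := by
    intro v hv
    have h1 := (Finset.mem_filter.mp (hVsubf hv)).1
    rw [Finset.mem_Ioc] at h1; exact h1
  have hVc : ∀ v ∈ V, c v = b := fun v hv => (Finset.mem_filter.mp (hVsubf hv)).2
  have hVgt : ∀ v ∈ V, M < v := fun v hv => (hVIoc v hv).1
  have hdisj : Disjoint (Finset.Icc 1 M) V := by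
    rw [Finset.disjoint_left]
    intro a ha hav
    rw [Finset.mem_Icc] at ha
    have := hVgt a hav; omega
  have hycard : (Finset.Icc 1 M ∪ V).card = l := by
    rw [Finset.card_union_of_disjoint hdisj, hIcccard, hVcard]; omega
  have hysub : Finset.Icc 1 M ∪ V ⊆ Finset.Icc 1 m := by
    intro a ha
    rcases Finset.mem_union.mp ha with h1 | h1
    · rw [Finset.mem_Icc] at h1 ⊢; omega
    · have := hVIoc a h1; rw [Finset.mem_Icc]; omega
  have F1 : ∀ (hp : (Finset.Icc 1 M ∪ V).card = l) (j : ℕ), 1 ≤ j → j ≤ M →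
      Renum (Finset.Icc 1 M ∪ V) hp j = j := by
    intro hp j h1 h2
    have e1 := enum_union hVcard hVgt hp (⟨j - 1, by omega⟩ : Fin l)
    have e2 := myf_lt hVcard (⟨j - 1, by omega⟩ : Fin l) (by show j - 1 < M; omega)
    rw [Renum_eq hp (by omega : j - 1 < l)]
    exact e1.trans (e2.trans (by show j - 1 + 1 = j; omega))
  have F2 : ∀ (hp : (Finset.Icc 1 M ∪ V).card = l) (t : ℕ), M < t → t ≤ l →
      Renum (Finset.Icc 1 M ∪ V) hp t ∈ V := by
    intro hp t h1 h2
    have e1 := enum_union hVcard hVgt hp (⟨t - 1, by omega⟩ : Fin l)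
    have e2 := myf_mem hVcard (⟨t - 1, by omega⟩ : Fin l) (by show ¬ t - 1 < M; omega)
    rw [Renum_eq hp (by omega : t - 1 < l), e1]
    exact e2
  refine ⟨⟨Finset.Icc 1 M ∪ V, hysub, hycard⟩, ?_, ?_⟩
  · intro x₁ x₂ h₁ h₂
    rcases Nat.eq_zero_or_pos k with hk0 | hk0
    · subst hk0
      rw [RHom_zero_eq x₁ x₂]
    have key : ∀ (x : RHom k l), Rdel x = x' →
        χ (Rcomp x ⟨Finset.Icc 1 M ∪ V, hysub, hycard⟩) = b := by
      intro x hx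
      obtain ⟨t, hxv, htn, hta, ht1, htl⟩ := fiber_struct hk0 (congrArg Subtype.val hx)
      have hMt : M < t := by
        rcases x'.val.eq_empty_or_nonempty with hE | hNE
        · have : M = 0 := by rw [hM, hE]; rfl
          omega
        · have hMmem : M ∈ x'.val := by
            rw [hM, max_unbot'_eq hNE]; exact x'.val.max'_mem hNE
          exact hta _ hMmem
      have hvV : Renum (Finset.Icc 1 M ∪ V) hycard t ∈ V := F2 hycard t hMt htl
      obtain ⟨hvM, hvm⟩ := hVIoc _ hvV
      have himg2 : x'.val.image (Renum (Finset.Icc 1 M ∪ V) hycard) = x'.val := by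
        have heq : ∀ a ∈ x'.val, Renum (Finset.Icc 1 M ∪ V) hycard a = a := by
          intro a ha
          have h1 := x'.2.1 ha
          rw [Finset.mem_Icc] at h1
          exact F1 hycard a h1.1 (hMx' a ha)
        calc x'.val.image (Renum (Finset.Icc 1 M ∪ V) hycard)
            = x'.val.image id := Finset.image_congr (fun a ha => heq a ha)
          _ = x'.val := Finset.image_id
      have himg : (Rcomp x ⟨Finset.Icc 1 M ∪ V, hysub, hycard⟩).val
          = insert (Renum (Finset.Icc 1 M ∪ V) hycard t) x'.val := by
        show x.val.image (Renum (Finset.Icc 1 M ∪ V) hycard) = _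
        rw [hxv, Finset.image_insert, himg2]
      have hrc : Rcomp x ⟨Finset.Icc 1 M ∪ V, hysub, hycard⟩ =
          ⟨insert (Renum (Finset.Icc 1 M ∪ V) hycard t) x'.val,
            cpf _ hk0 hvM hvm⟩ := Subtype.ext himg
      rw [hrc, ← hcspec _ hk0 hvM hvm]
      exact hVc _ hvV
    rw [key x₁ h₁, key x₂ h₂]
  · intro e he
    apply Subtype.ext
    have hLP : ((Finset.Icc 1 M ∪ V).erase ((Finset.Icc 1 M ∪ V).max.unbotD 0)).card
        = RdelObj l :=
      (Rdel (⟨Finset.Icc 1 M ∪ V, hysub, hycard⟩ : RHom l m)).2.2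
    show e.val.image (Renum ((Finset.Icc 1 M ∪ V).erase ((Finset.Icc 1 M ∪ V).max.unbotD 0)) hLP)
      = e.val.image (Renum (Finset.Icc 1 (l - 1)) hy'card)
    apply Finset.image_congr
    intro j hj
    have hj' : j ∈ e.val := hj
    have hj1 := e.2.1 hj'
    rw [Finset.mem_Icc] at hj1
    obtain ⟨hj1a, hj1b⟩ := hj1
    have hjM : j ≤ M := hMub e he j hj'
    exact (renum_erase_eq hycard hRl hLP j hj1a (by omega)).trans
      ((F1 hycard j hj1a hjM).trans (renum_Icc_eq hRl.symm hy'card j hj1a (by omega)).symm)
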